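/- Define P̃_n^{(α,c)}(x) = ((-1)^n / c^{2n}) ∑_{k=0}^n c^k (n-k+1)_k L_k^{(α)}(c x), where (a)_k is the Pochhammer symbol. Then L_n^{(α)}(c x) = (-1)^n ∑_{j=0}^n c^{2j-n} / (Γ(j+1) Γ(n-j+1)) · P̃_j^{(α,c)}(x). -/

import Mathlib

lemma prodShift : ∀ (k j : ℕ), k ≤ j →
    (∏ i ∈ Finset.range k, ((j:ℝ) - k + 1 + i)) * (Nat.factorial (j - k)) = Nat.factorial j := by
  intro k
  induction k with
  | zero => intro j _; simp
  | succ k ih =>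
    intro j h
    have hk : k ≤ j := Nat.le_of_succ_le h
    rw [Finset.prod_range_succ']
    have h1 : ∀ i : ℕ, ((j:ℝ) - (k+1 : ℕ) + 1 + ((i+1 : ℕ):ℝ)) = (j:ℝ) - k + 1 + i := by
      intro i; push_cast; ring
    rw [Finset.prod_congr rfl fun i _ => h1 i]
    have h2 : ((j:ℝ) - (k+1 : ℕ) + 1 + ((0:ℕ):ℝ)) = ((j - k : ℕ) : ℝ) := by
      push_cast [Nat.cast_sub hk]; ring
    have h3 : j - k = (j - (k+1)) + 1 := by omega
    have h4 : ((j - k : ℕ) : ℝ) * (Nat.factorial (j - (k+1))) = Nat.factorial (j - k) := by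
      rw [h3, Nat.factorial_succ]; push_cast; ring
    calc (∏ i ∈ Finset.range k, ((j:ℝ) - k + 1 + i)) * ((j:ℝ) - (k+1 : ℕ) + 1 + ((0:ℕ):ℝ)) *
          (Nat.factorial (j - (k+1)))
        = (∏ i ∈ Finset.range k, ((j:ℝ) - k + 1 + i)) *
            (((j - k : ℕ) : ℝ) * (Nat.factorial (j - (k+1)))) := by rw [h2]; ring
      _ = _ := by rw [h4, ih j hk]

lemma altSum (N : ℕ) : ∑ m ∈ Finset.range (N+1), (-1:ℝ)^m * (N.choose m : ℝ)
    = if N = 0 then 1 else 0 := by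
  have h := Int.alternating_sum_range_choose (n := N)
  have : ((∑ m ∈ Finset.range (N+1), (-1:ℤ)^m * (N.choose m : ℤ) : ℤ) : ℝ)
      = ((if N = 0 then (1:ℤ) else 0 : ℤ) : ℝ) := by rw [h]
  push_cast at this
  split_ifs with hN <;> simp [hN] at this ⊢ <;> convert this using 2 <;> simp [hN]

lemma signSum (n k : ℕ) (hk : k ≤ n) :
    ∑ j ∈ Finset.Ico k (n+1), (-1:ℝ)^j * ((Nat.factorial (n-j) : ℝ) * (Nat.factorial (j-k) : ℝ))⁻¹
      = if k = n then (-1:ℝ)^n else 0 := by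
  rw [Finset.sum_Ico_eq_sum_range]
  have hN : n + 1 - k = (n - k) + 1 := by omega
  rw [hN]
  set N := n - k with hNdef
  have step : ∀ m ∈ Finset.range (N+1),
      (-1:ℝ)^(k+m) * ((Nat.factorial (n-(k+m)) : ℝ) * (Nat.factorial (k+m-k) : ℝ))⁻¹
      = (-1:ℝ)^k * (Nat.factorial N : ℝ)⁻¹ * ((-1:ℝ)^m * (N.choose m : ℝ)) := by
    intro m hm
    have hmN : m ≤ N := by simpa using Nat.lt_succ_iff.mp (Finset.mem_range.mp hm)
    have h1 : n - (k+m) = N - m := by omega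
    have h2 : k + m - k = m := by omega
    have h3 : (N.choose m : ℝ) * (Nat.factorial m) * (Nat.factorial (N - m)) = Nat.factorial N := by
      exact_mod_cast congrArg (Nat.cast : ℕ → ℝ) (Nat.choose_mul_factorial_mul_factorial hmN)
    have hf1 : (Nat.factorial (N-m) : ℝ) ≠ 0 := Nat.cast_ne_zero.mpr (Nat.factorial_ne_zero _)
    have hf2 : (Nat.factorial m : ℝ) ≠ 0 := Nat.cast_ne_zero.mpr (Nat.factorial_ne_zero _)
    have hf3 : (Nat.factorial N : ℝ) ≠ 0 := Nat.cast_ne_zero.mpr (Nat.factorial_ne_zero _)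
    rw [h1, h2, pow_add]
    field_simp
    linear_combination -h3
  rw [Finset.sum_congr rfl step, ← Finset.mul_sum, altSum]
  by_cases hkn : k = n
  · have : N = 0 := by omega
    simp [this, hkn]
  · have : N ≠ 0 := by omega
    simp [this, hkn]



/-- Generalized Laguerre polynomial `L_n^{(α)}(x)` with real parameter `α`. -/
noncomputable def genLaguerre (n : ℕ) (α x : ℝ) : ℝ :=
  ∑ j ∈ Finset.range (n + 1),
    (-1) ^ j * ((∏ i ∈ Finset.range (n - j), (α + j + 1 + i)) / (Nat.factorial (n - j))) *
      x ^ j / (Nat.factorial j)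
/-- `P̃_n^{(α,c)}(x) = ((-1)^n / c^{2n}) ∑_{k=0}^n c^k (n-k+1)_k L_k^{(α)}(c x)`. -/
noncomputable def Pt (n : ℕ) (α c x : ℝ) : ℝ :=
  ((-1) ^ n / c ^ (2 * n)) *
    ∑ k ∈ Finset.range (n + 1),
      c ^ k * (∏ i ∈ Finset.range k, ((n : ℝ) - k + 1 + i)) * genLaguerre k α (c * x)

theorem laguerre_eq_sum_Pt (n : ℕ) (α c x : ℝ) (hc : c ≠ 0) :
    genLaguerre n α (c * x) =
      (-1) ^ n * ∑ j ∈ Finset.range (n + 1),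
        c ^ (2 * (j : ℤ) - (n : ℤ)) / (Real.Gamma (j + 1) * Real.Gamma ((n : ℝ) - j + 1)) *
          Pt j α c x := by
  set L : ℕ → ℝ := fun k => genLaguerre k α (c * x) with hL
  set g : ℕ → ℕ → ℝ := fun j k =>
    (-1:ℝ)^j * (c ^ k / c ^ n) * ((Nat.factorial (n-j) : ℝ) * (Nat.factorial (j-k) : ℝ))⁻¹ * L k
    with hg
  have hcn : (c:ℝ) ^ n ≠ 0 := pow_ne_zero _ hc
  have step1 : ∀ j ∈ Finset.range (n+1),
      c ^ (2 * (j : ℤ) - (n : ℤ)) / (Real.Gamma (j + 1) * Real.Gamma ((n : ℝ) - j + 1)) *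
        Pt j α c x = ∑ k ∈ Finset.range (j+1), g j k := by
    intro j hj
    have hjn : j ≤ n := Nat.lt_succ_iff.mp (Finset.mem_range.mp hj)
    have hG1 : Real.Gamma ((j:ℝ) + 1) = (Nat.factorial j : ℝ) := Real.Gamma_nat_eq_factorial j
    have hG2 : Real.Gamma ((n:ℝ) - j + 1) = (Nat.factorial (n - j) : ℝ) := by
      rw [show (n:ℝ) - j = ((n - j : ℕ) : ℝ) by rw [Nat.cast_sub hjn]]
      exact Real.Gamma_nat_eq_factorial (n - j)
    have hz : c ^ (2 * (j : ℤ) - (n : ℤ)) = c ^ (2*j) / c ^ n := by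
      rw [zpow_sub₀ hc]
      norm_cast
    rw [Pt, hG1, hG2, hz, Finset.mul_sum, Finset.mul_sum]
    apply Finset.sum_congr rfl
    intro k hk
    have hkj : k ≤ j := Nat.lt_succ_iff.mp (Finset.mem_range.mp hk)
    have hp := prodShift k j hkj
    have hf1 : (Nat.factorial j : ℝ) ≠ 0 := Nat.cast_ne_zero.mpr (Nat.factorial_ne_zero _)
    have hf2 : (Nat.factorial (n-j) : ℝ) ≠ 0 := Nat.cast_ne_zero.mpr (Nat.factorial_ne_zero _)
    have hf3 : (Nat.factorial (j-k) : ℝ) ≠ 0 := Nat.cast_ne_zero.mpr (Nat.factorial_ne_zero _)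
    have hp' : (∏ i ∈ Finset.range k, ((j:ℝ) - k + 1 + i))
        = (Nat.factorial j : ℝ) / (Nat.factorial (j-k) : ℝ) := by
      rw [eq_div_iff hf3]; exact hp
    rw [hg, hp']
    field_simp
    ring
  rw [Finset.sum_congr rfl step1]
  have swap : ∑ j ∈ Finset.range (n+1), ∑ k ∈ Finset.range (j+1), g j k
      = ∑ k ∈ Finset.Ico 0 (n+1), ∑ j ∈ Finset.Ico k (n+1), g j k := by
    simp only [Finset.range_eq_Ico]
    exact (Finset.sum_Ico_Ico_comm 0 (n+1) (fun k j => g j k)).symm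
  rw [swap]
  have inner : ∀ k ∈ Finset.Ico 0 (n+1),
      ∑ j ∈ Finset.Ico k (n+1), g j k = if k = n then (-1:ℝ)^n * L n else 0 := by
    intro k hk
    have hkn : k ≤ n := Nat.lt_succ_iff.mp (Finset.mem_Ico.mp hk).2
    have factor : ∑ j ∈ Finset.Ico k (n+1), g j k
        = (c ^ k / c ^ n * L k) *
          ∑ j ∈ Finset.Ico k (n+1),
            (-1:ℝ)^j * ((Nat.factorial (n-j) : ℝ) * (Nat.factorial (j-k) : ℝ))⁻¹ := by
      rw [Finset.mul_sum]
      apply Finset.sum_congr rfl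
      intro j _
      rw [hg]; ring
    rw [factor, signSum n k hkn]
    by_cases hkn' : k = n
    · subst hkn'; simp [div_self hcn]; ring
    · simp [hkn']
  rw [Finset.sum_congr rfl inner, Finset.sum_ite_eq' (Finset.Ico 0 (n+1)) n
    (fun _ => (-1:ℝ)^n * L n)]
  rw [if_pos (by simp)]
  rw [← mul_assoc, ← pow_add, ← two_mul, pow_mul]
  norm_num [hL]
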